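/- Let m ≥ 1 and define H(u,v) = [(1+u)(1+zu)(1+v)(1+zv)/((u−v)(1−zuv))]·[(1+u)/(1+zu)^{m+1} − (1+v)/(1+zv)^{m+1}], a formal power series in z with coefficients in ℚ[u,v]. Then H is symmetric in u and v, and satisfies the relation (u−v)(1−zuv)·H(u,v) = u(1+v)(1+zv)·H(u,0) − v(1+u)(1+zu)·H(v,0), where H(u,0) = ((1+u)(1+zu)/u)·((1+u)/(1+zu)^{m+1} − 1). -/

import Mathlib

open PowerSeries

noncomputable section

abbrev M := MvPolynomial (Fin 2) ℚ

def u : M := MvPolynomial.X 0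
def v : M := MvPolynomial.X 1

/-- Exchange of the variables u and v, extended to power series in z. -/
def swapUV : PowerSeries M → PowerSeries M :=
  PowerSeries.map (MvPolynomial.rename (Equiv.swap (0 : Fin 2) 1)).toRingHom

/-- Substitution v := 0 (keeping u):  H(z;u,v) ↦ H(z;u,0). -/
def subV0 : PowerSeries M → PowerSeries M :=
  PowerSeries.map (MvPolynomial.aeval fun i : Fin 2 =>
    if i = 0 then MvPolynomial.X 0 else (0 : M)).toRingHom

/-- Substitution (u,v) := (v,0):  H(z;u,v) ↦ H(z;v,0). -/
def subV0' : PowerSeries M → PowerSeries M :=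
  PowerSeries.map (MvPolynomial.aeval fun i : Fin 2 =>
    if i = 0 then MvPolynomial.X 1 else (0 : M)).toRingHom

/-- wu = 1+zu, wv = 1+zv as power series in z over ℚ[u,v]. -/
def wu : PowerSeries M := 1 + PowerSeries.X * PowerSeries.C (R := M) u
def wv : PowerSeries M := 1 + PowerSeries.X * PowerSeries.C (R := M) v

/-- Let m ≥ 1 and let H = [(1+u)(1+zu)(1+v)(1+zv)/((u−v)(1−zuv))]·
[(1+u)/(1+zu)^{m+1} − (1+v)/(1+zv)^{m+1}] ∈ ℚ[u,v][[z]], characterized by the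
denominator-cleared identity `hH`. Then H is symmetric in u and v, satisfies
(u−v)(1−zuv)H(u,v) = u(1+v)(1+zv)H(u,0) − v(1+u)(1+zu)H(v,0), and
H(u,0) = ((1+u)(1+zu)/u)·((1+u)/(1+zu)^{m+1} − 1) (stated with denominators cleared). -/
theorem H_symmetric_and_relation (m : ℕ) (hm : 1 ≤ m) (H : PowerSeries M)
    (hH : PowerSeries.C (R := M) (u - v) * (1 - PowerSeries.X * PowerSeries.C (R := M) (u*v)) *
            wu^(m+1) * wv^(m+1) * H
        = PowerSeries.C (R := M) (1 + u) * wu * PowerSeries.C (R := M) (1 + v) * wv *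
            (PowerSeries.C (R := M) (1 + u) * wv^(m+1) - PowerSeries.C (R := M) (1 + v) * wu^(m+1))) :
    swapUV H = H
    ∧ (PowerSeries.C (R := M) (u - v) * (1 - PowerSeries.X * PowerSeries.C (R := M) (u*v)) * H
        = PowerSeries.C (R := M) u * PowerSeries.C (R := M) (1 + v) * wv * subV0 H
          - PowerSeries.C (R := M) v * PowerSeries.C (R := M) (1 + u) * wu * subV0' H)
    ∧ (PowerSeries.C (R := M) u * wu^(m+1) * subV0 H
        = PowerSeries.C (R := M) (1 + u) * wu * (PowerSeries.C (R := M) (1 + u) - wu^(m+1))) := by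
  have hne : (u : M) ≠ v := MvPolynomial.X_injective.ne (by decide)
  have hCu_sub : PowerSeries.C (R := M) (u - v) ≠ 0 := by
    intro h
    have := congrArg (PowerSeries.constantCoeff (R := M)) h
    simp [sub_eq_zero] at this
    exact hne this
  have hwu : (wu : PowerSeries M) ≠ 0 := by
    intro h
    have := congrArg (PowerSeries.constantCoeff (R := M)) h
    simp [wu] at this
  have hwv : (wv : PowerSeries M) ≠ 0 := by
    intro h
    have := congrArg (PowerSeries.constantCoeff (R := M)) h
    simp [wv] at this
  have hz : (1 - PowerSeries.X * PowerSeries.C (R := M) (u*v)) ≠ 0 := by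
    intro h
    have := congrArg (PowerSeries.constantCoeff (R := M)) h
    simp at this
  -- the swap homomorphism computations
  set σ : M →+* M := (MvPolynomial.rename (Equiv.swap (0 : Fin 2) 1)).toRingHom with hσ
  have hσu : σ u = v := by simp [hσ, u, v]
  have hσv : σ v = u := by simp [hσ, u, v]
  set τ : M →+* M := (MvPolynomial.aeval fun i : Fin 2 =>
    if i = 0 then MvPolynomial.X 0 else (0 : M)).toRingHom with hτ
  have hτu : τ u = u := by simp [hτ, u]
  have hτv : τ v = 0 := by simp [hτ, v]
  set τ' : M →+* M := (MvPolynomial.aeval fun i : Fin 2 =>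
    if i = 0 then MvPolynomial.X 1 else (0 : M)).toRingHom with hτ'
  have hτ'u : τ' u = v := by simp [hτ', u, v]
  have hτ'v : τ' v = 0 := by simp [hτ', v]
  -- apply the three homomorphisms to hH
  have h1 := congrArg (PowerSeries.map σ) hH
  simp only [map_mul, map_sub, map_add, map_one, map_pow, PowerSeries.map_C,
    PowerSeries.map_X, wu, wv, hσu, hσv] at h1
  have h2 := congrArg (PowerSeries.map τ) hH
  simp only [map_mul, map_sub, map_add, map_one, map_pow, PowerSeries.map_C,
    PowerSeries.map_X, wu, wv, hτu, hτv, map_zero] at h2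
  have h3 := congrArg (PowerSeries.map τ') hH
  simp only [map_mul, map_sub, map_add, map_one, map_pow, PowerSeries.map_C,
    PowerSeries.map_X, wu, wv, hτ'u, hτ'v, map_zero] at h3
  simp only [map_sub, map_add, map_one, map_mul, wu, wv] at hH ⊢
  have hswap : swapUV H = PowerSeries.map σ H := rfl
  have hsub : subV0 H = PowerSeries.map τ H := rfl
  have hsub' : subV0' H = PowerSeries.map τ' H := rfl
  rw [hswap, hsub, hsub']
  set U := PowerSeries.C (R := M) u
  set V := PowerSeries.C (R := M) v
  set Z := (PowerSeries.X : PowerSeries M)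
  set K := (U - V) * (1 - Z * (U * V)) * (1 + Z * U)^(m+1) * (1 + Z * V)^(m+1) with hK
  have hKne : K ≠ 0 := by
    refine mul_ne_zero (mul_ne_zero (mul_ne_zero ?_ ?_) (pow_ne_zero _ ?_)) (pow_ne_zero _ ?_)
    · simpa [U, V, map_sub] using hCu_sub
    · simpa [U, V, Z, map_mul] using hz
    · simpa [wu, U, Z] using hwu
    · simpa [wv, V, Z] using hwv
  have h3' : U * (1 + Z * U)^(m+1) * PowerSeries.map τ H
      = (1 + U) * (1 + Z * U) * ((1 + U) - (1 + Z * U)^(m+1)) := by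
    linear_combination h2
  refine ⟨?_, ?_, by linear_combination h3'⟩
  · apply mul_left_cancel₀ hKne
    rw [hK]
    linear_combination -h1 - hH
  · apply mul_left_cancel₀ (mul_ne_zero (pow_ne_zero (m+1) hwu) (pow_ne_zero (m+1) hwv))
    simp only [wu, wv]
    linear_combination hH - ((1+V)*(1+Z*V)*(1+Z*V)^(m+1)) * h2 + ((1+U)*(1+Z*U)*(1+Z*U)^(m+1)) * h3


end
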